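/- For integers n ≥ 4 and even i with 2 ≤ i ≤ n-2, the identity ∑_{j=0}^{i/2} C(2n, i - 2j) = C(2n-2, i) + 2 · ∑_{j=0}^{i} ∑_{l=0}^{i-j-1} C(n-1, j) · C(n-1, l) holds, where empty sums are 0. -/
import Mathlib

/-- Vandermonde as a sum over `range`. -/
lemma vdm_range (m i : ℕ) :
    ∑ j ∈ Finset.range (i + 1), Nat.choose m j * Nat.choose m (i - j) =
      Nat.choose (m + m) i := by
  rw [Nat.add_choose_eq, Finset.Nat.sum_antidiagonal_eq_sum_range_succ_mk]

/-- The double sum equals a single sum of `C(m+m, s)`. -/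
lemma lemA (m i : ℕ) :
    ∑ j ∈ Finset.range (i + 1), ∑ l ∈ Finset.range (i - j),
        Nat.choose m j * Nat.choose m l =
      ∑ s ∈ Finset.range i, Nat.choose (m + m) s := by
  induction i with
  | zero => simp
  | succ i ih =>
    rw [Finset.sum_range_succ (fun s => Nat.choose (m + m) s), ← ih, ← vdm_range m i]
    rw [Finset.sum_range_succ]
    have h1 : ∀ j ∈ Finset.range (i + 1),
        ∑ l ∈ Finset.range (i + 1 - j), Nat.choose m j * Nat.choose m l =
          (∑ l ∈ Finset.range (i - j), Nat.choose m j * Nat.choose m l)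
            + Nat.choose m j * Nat.choose m (i - j) := by
      intro j hj
      have : i + 1 - j = (i - j) + 1 := by
        have := Finset.mem_range.mp hj; omega
      rw [this, Finset.sum_range_succ]
    rw [Finset.sum_congr rfl h1, Finset.sum_add_distrib]
    simp

/-- Main induction on even `i`. -/
lemma lemB (m k : ℕ) :
    ∑ j ∈ Finset.range (2 * k / 2 + 1), Nat.choose (m + m + 2) (2 * k - 2 * j) =
      Nat.choose (m + m) (2 * k) + 2 * ∑ s ∈ Finset.range (2 * k), Nat.choose (m + m) s := by
  induction k with
  | zero => simp
  | succ k ih =>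
    have hdiv : 2 * (k + 1) / 2 = 2 * k / 2 + 1 := by omega
    rw [hdiv, Finset.sum_range_succ']
    have harg : ∀ j : ℕ, 2 * (k + 1) - 2 * (j + 1) = 2 * k - 2 * j := by omega
    simp only [harg]
    rw [ih, Nat.sub_zero]
    have hs : 2 * (k + 1) = 2 * k + 1 + 1 := by omega
    have hpascal : Nat.choose (m + m + 2) (2 * (k + 1)) =
        Nat.choose (m + m) (2 * k) + 2 * Nat.choose (m + m) (2 * k + 1)
          + Nat.choose (m + m) (2 * k + 2) := by
      rw [hs]
      rw [show m + m + 2 = (m + m + 1) + 1 from rfl, Nat.choose_succ_succ,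
        Nat.choose_succ_succ, Nat.choose_succ_succ (m + m) (2 * k + 1)]
      ring
    rw [hpascal, hs, Finset.sum_range_succ, Finset.sum_range_succ]
    ring

/-- Corollary 4.3, even case: for even `i` with `2 ≤ i ≤ n-2`,
`∑_{j=0}^{i/2} C(2n, i-2j) = C(2n-2, i) + 2 ∑_{j=0}^{i} ∑_{l=0}^{i-j-1} C(n-1,j) C(n-1,l)`. -/
theorem statement5 (n i : ℕ) (hn : 4 ≤ n) (hi1 : 2 ≤ i) (hi2 : i ≤ n - 2) (heven : Even i) :
    ∑ j ∈ Finset.range (i / 2 + 1), Nat.choose (2 * n) (i - 2 * j) =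
      Nat.choose (2 * n - 2) i +
        2 * ∑ j ∈ Finset.range (i + 1), ∑ l ∈ Finset.range (i - j),
          Nat.choose (n - 1) j * Nat.choose (n - 1) l := by
  obtain ⟨k, hk⟩ := heven
  set m := n - 1 with hm
  have h1 : 2 * n = m + m + 2 := by omega
  have h2 : 2 * n - 2 = m + m := by omega
  have h3 : i = 2 * k := by omega
  rw [lemA, h2, h1, h3, lemB]
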